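/- arXiv:1602.05020 — 3 statements merged into one kernel-verified Lean document; each statement's English description precedes it below -/
import Mathlib

section
/- With the coefficients 𝒟 = (1/|h'|)·{ (p/4)|h''/h'|² + ε[1 + (Z/2)(h''/h') + (conj(Z)/2)(conj(h'')/conj(h'))] }, ℰ = (|h|²/|h'|)·{ (p/4)|h''/h' − 2h'/h|² + ε[1 + (Z/2)(h''/h' − 2h'/h) + (conj(Z)/2)(conj(h'')/conj(h') − 2conj(h')/conj(h))] }, and ℱ = (h/|h'|)·{ (p/4)(h''/h' − 2h'/h)(conj(h'')/conj(h')) + ε[1 + (Z/2)(h''/h' − 2h'/h) + (conj(Z)/2)(conj(h'')/conj(h'))] }, one has ℱ·conj(ℱ) − 𝒟·ℰ = −ε. -/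
open Complex

set_option maxHeartbeats 1000000 in
/-- Second identity (2.6): `ℱ conj ℱ − 𝒟 ℰ = −ε` for the coefficients (2.5). -/
theorem identity_FFbar_DE (h : ℂ → ℂ) (Z : ℂ) (ε : ℝ)
    (hε : ε = -1 ∨ ε = 0 ∨ ε = 1)
    (hhol : AnalyticAt ℂ h Z) (hh : h Z ≠ 0) (hh' : deriv h Z ≠ 0)
    (p : ℝ) (hp : p = 1 + ε * Complex.normSq Z) (hppos : 0 < p) :
    let m : ℂ := ‖deriv h Z‖
    let A : ℂ := iteratedDeriv 2 h Z / deriv h Z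
    let B : ℂ := iteratedDeriv 2 h Z / deriv h Z - 2 * deriv h Z / h Z
    let 𝒟 : ℂ := (1 / m) * ((p / 4) * (A * star A) +
      ε * (1 + (Z / 2) * A + (star Z / 2) * star A))
    let ℰ : ℂ := (Complex.normSq (h Z) / m) * ((p / 4) * (B * star B) +
      ε * (1 + (Z / 2) * B + (star Z / 2) * star B))
    let ℱ : ℂ := (h Z / m) * ((p / 4) * B * star A +
      ε * (1 + (Z / 2) * B + (star Z / 2) * star A))
    ℱ * star ℱ - 𝒟 * ℰ = -ε := by
  intro m A B 𝒟 ℰ ℱ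
  have hM : (‖deriv h Z‖ : ℂ) ≠ 0 := by
    simpa using hh'
  have hr : (starRingEnd ℂ) (h Z) ≠ 0 := by
    simpa using hh
  have e1 : deriv h Z * (starRingEnd ℂ) (deriv h Z)
      = (‖deriv h Z‖ : ℂ) * (‖deriv h Z‖) := by
    rw [Complex.mul_conj]
    norm_cast
    rw [← Complex.sq_norm]
    ring
  have hq' : (starRingEnd ℂ) (deriv h Z)
      = (‖deriv h Z‖ : ℂ) * (‖deriv h Z‖) / deriv h Z := by
    field_simp [← e1]
    linear_combination e1
  have e2 : (Complex.normSq (h Z) : ℂ) = h Z * (starRingEnd ℂ) (h Z) :=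
    (Complex.mul_conj _).symm
  have e3 : (p : ℂ) = 1 + ε * (Z * (starRingEnd ℂ) Z) := by
    rw [hp]
    push_cast
    rw [Complex.mul_conj]
  simp only [ℱ, 𝒟, ℰ, A, B, m, Complex.star_def, map_mul, map_add, map_sub, map_div₀,
    map_one, map_ofNat, Complex.conj_conj, Complex.conj_ofReal]
  rw [hq', e2, e3]
  generalize (‖deriv h Z‖ : ℂ) = M at hM ⊢
  generalize (starRingEnd ℂ) (h Z) = r at hr ⊢
  generalize hb : iteratedDeriv 2 h Z = b
  generalize hu : (starRingEnd ℂ) b = u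
  generalize hc : (starRingEnd ℂ) Z = c
  generalize ha : deriv h Z = a at hh' ⊢
  generalize hw : h Z = w at hh ⊢
  have hF : w / M *
          ((1 + ε * (Z * c)) / 4 * (b / a - 2 * a / w) * (u / (M * M / a)) +
            ε * (1 + Z / 2 * (b / a - 2 * a / w) + c / 2 * (u / (M * M / a)))) =
      ((1 + ε * (Z * c)) * (b * w - 2 * a * a) * u * a +
        ε * (4 * a * w * (M * M) + 2 * Z * (M * M) * (b * w - 2 * a * a) + 2 * c * u * a * a * w)) /
      (4 * a * M ^ 3) := by
    simp only [div_div_eq_mul_div, mul_div_assoc', div_div]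
    field_simp
    first
      | (rw [div_eq_iff (by simp [mul_eq_zero, hM, hh, hh', hr])]; ring)
      | (rw [div_add_div _ _ (by simp [mul_eq_zero, hM, hh, hh', hr])
            (by simp [mul_eq_zero, hM, hh, hh', hr]),
          mul_div_assoc', div_mul_eq_mul_div,
          div_eq_iff (by simp [mul_eq_zero, hM, hh, hh', hr])]; ring)
      | ring
  have hFb : r / M *
          ((1 + ε * (Z * c)) / 4 * (u / (M * M / a) - 2 * (M * M / a) / r) * (b / a) +
            ε * (1 + c / 2 * (u / (M * M / a) - 2 * (M * M / a) / r) + Z / 2 * (b / a))) =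
      ((1 + ε * (Z * c)) * b * (u * a * a * r - 2 * M ^ 4) +
        ε * (4 * a * a * r * (M * M) + 2 * c * a * (u * a * a * r - 2 * M ^ 4) +
          2 * Z * a * b * r * (M * M))) /
      (4 * a ^ 2 * M ^ 3) := by
    simp only [div_div_eq_mul_div, mul_div_assoc', div_div]
    field_simp
    first
      | (rw [div_eq_iff (by simp [mul_eq_zero, hM, hh, hh', hr])]; ring)
      | (rw [div_add_div _ _ (by simp [mul_eq_zero, hM, hh, hh', hr])
            (by simp [mul_eq_zero, hM, hh, hh', hr]),
          mul_div_assoc', div_mul_eq_mul_div,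
          div_eq_iff (by simp [mul_eq_zero, hM, hh, hh', hr])]; ring)
      | ring
  have hD : 1 / M *
          ((1 + ε * (Z * c)) / 4 * (b / a * (u / (M * M / a))) +
            ε * (1 + Z / 2 * (b / a) + c / 2 * (u / (M * M / a)))) =
      ((1 + ε * (Z * c)) * b * u * a +
        ε * (4 * a * (M * M) + 2 * Z * b * (M * M) + 2 * c * u * a * a)) /
      (4 * a * M ^ 3) := by
    simp only [div_div_eq_mul_div, mul_div_assoc', div_div]
    field_simp
    first
      | (rw [div_eq_iff (by simp [mul_eq_zero, hM, hh, hh', hr])]; ring)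
      | (rw [div_add_div _ _ (by simp [mul_eq_zero, hM, hh, hh', hr])
            (by simp [mul_eq_zero, hM, hh, hh', hr]),
          mul_div_assoc', div_mul_eq_mul_div,
          div_eq_iff (by simp [mul_eq_zero, hM, hh, hh', hr])]; ring)
      | ring
  have hE : w * r / M *
          ((1 + ε * (Z * c)) / 4 * ((b / a - 2 * a / w) * (u / (M * M / a) - 2 * (M * M / a) / r)) +
            ε * (1 + Z / 2 * (b / a - 2 * a / w) + c / 2 * (u / (M * M / a) - 2 * (M * M / a) / r))) =
      (a * (1 + ε * (Z * c)) * (b * w - 2 * a * a) * (u * a * a * r - 2 * M ^ 4) +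
        ε * (4 * a ^ 3 * w * r * (M * M) + 2 * Z * a * a * r * (M * M) * (b * w - 2 * a * a) +
          2 * c * a * a * w * (u * a * a * r - 2 * M ^ 4))) /
      (4 * a ^ 3 * M ^ 3) := by
    simp only [div_div_eq_mul_div, mul_div_assoc', div_div]
    field_simp
    first
      | (rw [div_eq_iff (by simp [mul_eq_zero, hM, hh, hh', hr])]; ring)
      | (rw [div_add_div _ _ (by simp [mul_eq_zero, hM, hh, hh', hr])
            (by simp [mul_eq_zero, hM, hh, hh', hr]),
          mul_div_assoc', div_mul_eq_mul_div,
          div_eq_iff (by simp [mul_eq_zero, hM, hh, hh', hr])]; ring)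
      | ring
  rw [hF, hFb, hD, hE]
  rw [div_mul_div_comm, div_mul_div_comm, div_sub_div _ _
    (by simp [mul_eq_zero, hM, hh, hh', hr]) (by simp [mul_eq_zero, hM, hh, hh', hr]),
    div_eq_iff (by simp [mul_eq_zero, hM, hh, hh', hr])]
  ring
end

section
/- With 𝒜 = 1/(p|h'|), ℬ = |h|²/(p|h'|), 𝒞 = h/(p|h'|), and 𝒟, ℰ, ℱ as in the transformation (2.5) for expanding impulsive waves, the identity 𝒜·ℰ + ℬ·𝒟 − 𝒞·conj(ℱ) − conj(𝒞)·ℱ = 1 holds. -/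
open Complex

/-- Third identity (2.6): `𝒜ℰ + ℬ𝒟 − 𝒞 conj ℱ − conj 𝒞 ℱ = 1` for the
coefficients (2.5). -/
theorem identity_AE_BD_CF (h : ℂ → ℂ) (Z : ℂ) (ε : ℝ)
    (hε : ε = -1 ∨ ε = 0 ∨ ε = 1)
    (hhol : AnalyticAt ℂ h Z) (hh : h Z ≠ 0) (hh' : deriv h Z ≠ 0)
    (p : ℝ) (hp : p = 1 + ε * Complex.normSq Z) (hppos : 0 < p) :
    let m : ℂ := ‖deriv h Z‖
    let A : ℂ := iteratedDeriv 2 h Z / deriv h Z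
    let B : ℂ := iteratedDeriv 2 h Z / deriv h Z - 2 * deriv h Z / h Z
    let 𝒜 : ℂ := 1 / (p * m)
    let ℬ : ℂ := Complex.normSq (h Z) / (p * m)
    let 𝒞 : ℂ := h Z / (p * m)
    let 𝒟 : ℂ := (1 / m) * ((p / 4) * (A * star A) +
      ε * (1 + (Z / 2) * A + (star Z / 2) * star A))
    let ℰ : ℂ := (Complex.normSq (h Z) / m) * ((p / 4) * (B * star B) +
      ε * (1 + (Z / 2) * B + (star Z / 2) * star B))
    let ℱ : ℂ := (h Z / m) * ((p / 4) * B * star A +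
      ε * (1 + (Z / 2) * B + (star Z / 2) * star A))
    𝒜 * ℰ + ℬ * 𝒟 - 𝒞 * star ℱ - star 𝒞 * ℱ = 1 := by
  intro m A B 𝒜 ℬ 𝒞 𝒟 ℰ ℱ
  set f := h Z with hf_def
  set d := deriv h Z with hd_def
  set s := iteratedDeriv 2 h Z with hs_def
  have hf : f ≠ 0 := hh
  have hd : d ≠ 0 := hh'
  have hf' : (starRingEnd ℂ) f ≠ 0 := by simpa using hf
  have hd' : (starRingEnd ℂ) d ≠ 0 := by simpa using hd
  have hpC : (p : ℂ) ≠ 0 := by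
    exact_mod_cast ne_of_gt hppos
  have hm : m ≠ 0 := by
    simp only [m, ne_eq, Complex.ofReal_eq_zero, map_eq_zero, norm_eq_zero]
    exact hd
  have hmm : m * m = d * (starRingEnd ℂ) d := by
    rw [Complex.mul_conj]
    simp only [m]
    norm_cast
    rw [← Complex.sq_norm]
    ring
  simp only [𝒜, ℬ, 𝒞, 𝒟, ℰ, ℱ, A, B, m] at *
  simp only [RCLike.star_def, map_mul, map_add, map_sub, map_div₀, map_one,
    map_ofNat, Complex.conj_conj, Complex.conj_ofReal]
  simp only [← Complex.mul_conj]
  set M : ℂ := (‖d‖ : ℂ) with hM_def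
  set c : ℂ → ℂ := fun x => (starRingEnd ℂ) x with hc_def
  calc 1 / (↑p * M) * (f * c f / M * (↑p / 4 * ((s / d - 2 * d / f) * (c s / c d - 2 * c d / c f)) +
          ↑ε * (1 + Z / 2 * (s / d - 2 * d / f) + c Z / 2 * (c s / c d - 2 * c d / c f)))) +
        f * c f / (↑p * M) * (1 / M * (↑p / 4 * (s / d * (c s / c d)) +
          ↑ε * (1 + Z / 2 * (s / d) + c Z / 2 * (c s / c d)))) -
        f / (↑p * M) * (c f / M * (↑p / 4 * (c s / c d - 2 * c d / c f) * (s / d) +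
          ↑ε * (1 + c Z / 2 * (c s / c d - 2 * c d / c f) + Z / 2 * (s / d)))) -
        c f / (↑p * M) * (f / M * (↑p / 4 * (s / d - 2 * d / f) * (c s / c d) +
          ↑ε * (1 + Z / 2 * (s / d - 2 * d / f) + c Z / 2 * (c s / c d))))
      = (f * c f) / (↑p * (M * M)) * (↑p / 4 * (2 * d / f) * (2 * c d / c f)) := by
        ring
    _ = (d * c d) / (M * M) := by have : c f ≠ 0 := hf'; field_simp; ring
    _ = 1 := by rw [hmm]; field_simp; rfl
end

section
/- The refraction formulas for velocities across the expanding impulse preserve the normalization: if (𝒰̇⁻, 𝒱̇⁻, η̇⁻) are obtained from (𝒰̇⁺, 𝒱̇⁺, η̇⁺) via the linear map with coefficients (4.3)–(4.5) built from h and its derivatives at Z_i, then η̇⁻·conj(η̇⁻) − 𝒰̇⁻·𝒱̇⁻ = η̇⁺·conj(η̇⁺) − 𝒰̇⁺·𝒱̇⁺. -/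
open Complex


private lemma refraction_core (H0 H0b G Gb Zi Zib k A Ab U V e eb : ℂ)
    (hk : k * k * (G * H0 * (Gb * H0b)) = 1) :
    (k / 2 * ((1 + Zi / 2 * A) * Ab) * U
      + H0 * H0b * k / 2 * ((1 + Zi / 2 * (A - 2 * G)) * (Ab - 2 * Gb)) * V
      - H0b * k / 2 * ((1 + Zi / 2 * A) * (Ab - 2 * Gb)) * e
      - H0 * k / 2 * ((1 + Zi / 2 * (A - 2 * G)) * Ab) * eb) *
    (k / 2 * ((1 + Zib / 2 * Ab) * A) * U
      + H0 * H0b * k / 2 * ((1 + Zib / 2 * (Ab - 2 * Gb)) * (A - 2 * G)) * V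
      - H0 * k / 2 * ((1 + Zib / 2 * Ab) * (A - 2 * G)) * eb
      - H0b * k / 2 * ((1 + Zib / 2 * (Ab - 2 * Gb)) * A) * e) -
    (k * ((1 + Zi / 2 * A) * (1 + Zib / 2 * Ab)) * U
      + H0 * H0b * k * ((1 + Zi / 2 * (A - 2 * G)) * (1 + Zib / 2 * (Ab - 2 * Gb))) * V
      - H0b * k * ((1 + Zib / 2 * (Ab - 2 * Gb)) * (1 + Zi / 2 * A)) * e
      - H0 * k * ((1 + Zi / 2 * (A - 2 * G)) * (1 + Zib / 2 * Ab)) * eb) *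
    (k / 4 * (A * Ab) * U
      + H0 * H0b * k / 4 * ((A - 2 * G) * (Ab - 2 * Gb)) * V
      - H0b * k / 4 * ((Ab - 2 * Gb) * A) * e
      - H0 * k / 4 * ((A - 2 * G) * Ab) * eb)
    = e * eb - U * V := by
  linear_combination (e * eb - U * V) * hk

/-- The refraction formulas (4.2)–(4.5) for velocities across the expanding
impulse preserve the normalization:
`η̇⁻ conj η̇⁻ − 𝒰̇⁻ 𝒱̇⁻ = η̇⁺ conj η̇⁺ − 𝒰̇⁺ 𝒱̇⁺`. -/
theorem refraction_preserves_normalization (h : ℂ → ℂ) (Zi : ℂ)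
    (hhol : AnalyticAt ℂ h Zi) (hh : h Zi ≠ 0) (hh' : deriv h Zi ≠ 0)
    (Udot Vdot : ℝ) (ηdot : ℂ) :
    let H0 : ℂ := h Zi
    let H1 : ℂ := deriv h Zi
    let H2 : ℂ := iteratedDeriv 2 h Zi
    let m : ℂ := ((‖H1‖ : ℝ) : ℂ)
    let A : ℂ := H2 / H1
    let B : ℂ := H2 / H1 - 2 * H1 / H0
    let q1 : ℂ := 1 + Zi / 2 * A
    let q2 : ℂ := 1 + Zi / 2 * B
    let aU : ℂ := (1 / m) * (q1 * star q1)
    let bU : ℂ := (H0 * star H0 / m) * (q2 * star q2)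
    let cU : ℂ := -(H0 / m) * q2 * star q1
    let aV : ℂ := (1 / (4 * m)) * (A * star A)
    let bV : ℂ := (H0 * star H0 / (4 * m)) * (B * star B)
    let cV : ℂ := -(H0 / (4 * m)) * B * star A
    let aη : ℂ := (1 / (2 * m)) * q1 * star A
    let bη : ℂ := (H0 * star H0 / (2 * m)) * q2 * star B
    let cbarη : ℂ := -(star H0 / (2 * m)) * q1 * star B
    let cη : ℂ := -(H0 / (2 * m)) * q2 * star A
    let Udot' : ℂ := aU * (Udot : ℂ) + bU * (Vdot : ℂ) + star cU * ηdot + cU * star ηdot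
    let Vdot' : ℂ := aV * (Udot : ℂ) + bV * (Vdot : ℂ) + star cV * ηdot + cV * star ηdot
    let ηdot' : ℂ := aη * (Udot : ℂ) + bη * (Vdot : ℂ) + cbarη * ηdot + cη * star ηdot
    ηdot' * star ηdot' - Udot' * Vdot' =
      ηdot * star ηdot - (Udot : ℂ) * (Vdot : ℂ) := by
  intro H0 H1 H2 m A B q1 q2 aU bU cU aV bV cV aη bη cbarη cη Up Vp Ep
  have hH1 : H1 ≠ 0 := hh'
  have hH0 : H0 ≠ 0 := hh
  have hm : m ≠ 0 := by
    simp only [m, Complex.ofReal_ne_zero]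
    exact norm_ne_zero_iff.2 hh'
  have hmc : (starRingEnd ℂ) m = m := by simp [m, Complex.conj_ofReal]
  have hm2 : m * m = H1 * (starRingEnd ℂ) H1 := by
    simp only [m, Complex.mul_conj, ← Complex.ofReal_mul]
    norm_cast
    rw [← Complex.sq_norm]; ring
  have hH0c : (starRingEnd ℂ) H0 ≠ 0 := by simpa using hH0
  have hH1c : (starRingEnd ℂ) H1 ≠ 0 := by simpa using hH1
  have hk : m⁻¹ * m⁻¹ * ((H1 / H0) * H0 *
      (((starRingEnd ℂ) H1 / (starRingEnd ℂ) H0) * (starRingEnd ℂ) H0)) = 1 := by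
    field_simp
    linear_combination (-1 : ℂ) * hm2
  simp only [Up, Vp, Ep, aU, bU, cU, aV, bV, cV, aη, bη, cbarη, cη, q1, q2, A, B,
    Complex.star_def, map_add, map_mul, map_sub, map_div₀, map_one, map_neg, map_ofNat,
    Complex.conj_conj, Complex.conj_ofReal, hmc]
  linear_combination refraction_core H0 ((starRingEnd ℂ) H0) (H1 / H0)
    ((starRingEnd ℂ) H1 / (starRingEnd ℂ) H0) Zi ((starRingEnd ℂ) Zi) m⁻¹
    (H2 / H1) ((starRingEnd ℂ) H2 / (starRingEnd ℂ) H1)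
    (Udot : ℂ) (Vdot : ℂ) ηdot ((starRingEnd ℂ) ηdot) hk
end
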